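/- arXiv:1510.06128 — 3 statements merged into one kernel-verified Lean document; each statement's English description precedes it below -/
import Mathlib

section
/- For all real constants a and b, the limit as x → ∞ (over positive reals) of Γ(x+a) / (Γ(x+b) · x^{a-b}) equals 1. -/
open Filter Real

private lemma log_shift_tendsto (c : ℝ) :
    Tendsto (fun x : ℝ => Real.log (x + c) - Real.log x) atTop (nhds 0) := by
  have h1 : Tendsto (fun x : ℝ => (x + c) / x) atTop (nhds 1) := by
    have : (fun x : ℝ => (x + c) / x) =ᶠ[atTop] fun x => 1 + c / x := by
      filter_upwards [eventually_gt_atTop 0] with x hx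
      field_simp
    rw [tendsto_congr' this]
    have := tendsto_const_nhds (x := (1:ℝ)) (f := atTop) |>.add
      (tendsto_const_nhds.div_atTop (tendsto_id (α := ℝ)) : Tendsto (fun x : ℝ => c / x) atTop (nhds 0))
    simpa using this
  have h2 : Tendsto (fun x : ℝ => Real.log ((x + c) / x)) atTop (nhds 0) := by
    have := (Real.continuousAt_log one_ne_zero).tendsto.comp h1
    simpa [Function.comp_def] using this
  refine h2.congr' ?_
  filter_upwards [eventually_gt_atTop (max 0 (-c))] with x hx
  have hx0 : 0 < x := lt_of_le_of_lt (le_max_left _ _) hx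
  have hxc : 0 < x + c := by
    have := lt_of_le_of_lt (le_max_right 0 (-c)) hx
    linarith
  rw [Real.log_div hxc.ne' hx0.ne']

private lemma log_gamma_step {c : ℝ} (hc : 0 < c) :
    Real.log (Real.Gamma (c + 1)) - Real.log (Real.Gamma c) = Real.log c := by
  rw [Real.Gamma_add_one hc.ne', Real.log_mul hc.ne' (Real.Gamma_pos_of_pos hc).ne']
  ring

private lemma gamma_ratio_aux {a b : ℝ} (hab : b < a) :
    Tendsto (fun x : ℝ => Real.Gamma (x + a) / (Real.Gamma (x + b) * x ^ (a - b)))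
      atTop (nhds 1) := by
  set f : ℝ → ℝ := fun x => Real.log (Real.Gamma x) with hf
  have hconv : ConvexOn ℝ (Set.Ioi 0) f := by
    simpa [Function.comp_def, hf] using Real.convexOn_log_Gamma
  set g : ℝ → ℝ := fun x => f (x + a) - f (x + b) - (a - b) * Real.log x with hg
  -- squeeze g → 0
  have hlo : Tendsto (fun x : ℝ => (a - b) * (Real.log (x + (b - 1)) - Real.log x))
      atTop (nhds 0) := by
    simpa using (log_shift_tendsto (b - 1)).const_mul (a - b)
  have hhi : Tendsto (fun x : ℝ => (a - b) * (Real.log (x + a) - Real.log x))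
      atTop (nhds 0) := by
    simpa using (log_shift_tendsto a).const_mul (a - b)
  have hab' : 0 < a - b := by linarith
  have hgt : Tendsto g atTop (nhds 0) := by
    apply tendsto_of_tendsto_of_tendsto_of_le_of_le' hlo hhi
    · filter_upwards [eventually_gt_atTop (1 + |a| + |b|)] with x hx
      have h1 : 0 < x + b - 1 := by
        have := neg_abs_le b; nlinarith [abs_nonneg a]
      have h2 : 0 < x + b := by linarith
      have h3 : 0 < x + a := by
        have := neg_abs_le a; nlinarith [abs_nonneg b]
      have key := hconv.slope_mono_adjacent (x := x + b - 1) (y := x + b) (z := x + a)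
        (Set.mem_Ioi.2 h1) (Set.mem_Ioi.2 h3) (by linarith) (by linarith)
      have hs : f (x + b) - f (x + b - 1) = Real.log (x + b - 1) := by
        have := log_gamma_step h1
        simpa [sub_add_cancel] using this
      rw [show x + b - (x + b - 1) = (1:ℝ) by ring, show x + a - (x + b) = a - b by ring,
        div_one, hs, le_div_iff₀ hab'] at key
      have hbb : x + (b - 1) = x + b - 1 := by ring
      rw [hbb]
      simp only [hg]
      nlinarith
    · filter_upwards [eventually_gt_atTop (1 + |a| + |b|)] with x hx
      have h2 : 0 < x + b := by
        have := neg_abs_le b; nlinarith [abs_nonneg a]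
      have h3 : 0 < x + a := by
        have := neg_abs_le a; nlinarith [abs_nonneg b]
      have key := hconv.slope_mono_adjacent (x := x + b) (y := x + a) (z := x + a + 1)
        (Set.mem_Ioi.2 h2) (Set.mem_Ioi.2 (by linarith)) (by linarith) (by linarith)
      have hs : f (x + a + 1) - f (x + a) = Real.log (x + a) := log_gamma_step h3
      rw [show x + a - (x + b) = a - b by ring, show x + a + 1 - (x + a) = (1:ℝ) by ring,
        div_one, hs, div_le_iff₀ hab'] at key
      simp only [hg]
      nlinarith
  have := (Real.continuous_exp.tendsto 0).comp hgt
  rw [Real.exp_zero] at this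
  refine this.congr' ?_
  filter_upwards [eventually_gt_atTop (1 + |a| + |b|)] with x hx
  have hx0 : 0 < x := by nlinarith [abs_nonneg a, abs_nonneg b]
  have h2 : 0 < x + b := by
    have := neg_abs_le b; nlinarith [abs_nonneg a]
  have h3 : 0 < x + a := by
    have := neg_abs_le a; nlinarith [abs_nonneg b]
  have hGa := Real.Gamma_pos_of_pos h3
  have hGb := Real.Gamma_pos_of_pos h2
  simp only [Function.comp, hg, hf]
  rw [Real.exp_sub, Real.exp_sub, Real.exp_log hGa, Real.exp_log hGb,
    show (a - b) * Real.log x = Real.log x * (a - b) from mul_comm _ _,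
    ← Real.rpow_def_of_pos hx0, div_div]

theorem gamma_ratio_asymptotics (a b : ℝ) :
    Filter.Tendsto (fun x : ℝ => Real.Gamma (x + a) / (Real.Gamma (x + b) * x ^ (a - b)))
      Filter.atTop (nhds 1) := by
  rcases lt_trichotomy a b with h | h | h
  · have := (gamma_ratio_aux h).inv₀ one_ne_zero
    rw [inv_one] at this
    refine this.congr' ?_
    filter_upwards [eventually_gt_atTop (1 + |a| + |b|)] with x hx
    have hx0 : 0 < x := by nlinarith [abs_nonneg a, abs_nonneg b]
    have h2 : 0 < x + b := by
      have := neg_abs_le b; nlinarith [abs_nonneg a]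
    have h3 : 0 < x + a := by
      have := neg_abs_le a; nlinarith [abs_nonneg b]
    have hGa := (Real.Gamma_pos_of_pos h3).ne'
    have hGb := (Real.Gamma_pos_of_pos h2).ne'
    have hp : (0:ℝ) < x ^ (a - b) := Real.rpow_pos_of_pos hx0 _
    rw [show b - a = -(a - b) by ring, Real.rpow_neg hx0.le]
    field_simp
  · subst h
    have : (fun x : ℝ => Real.Gamma (x + a) / (Real.Gamma (x + a) * x ^ (a - a)))
        =ᶠ[atTop] fun _ => 1 := by
      filter_upwards [eventually_gt_atTop (|a| + 1)] with x hx
      have h3 : 0 < x + a := by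
        have := neg_abs_le a; nlinarith [abs_nonneg a]
      have hG := (Real.Gamma_pos_of_pos h3).ne'
      simp [sub_self, Real.rpow_zero, div_self, hG]
    rw [tendsto_congr' this]
    exact tendsto_const_nhds
  · exact gamma_ratio_aux h
end

section
/- Let N be a positive integer and r_1, …, r_N ≥ 0 real numbers. Then ∫_{[0,2π]^N} | det_{1≤k,j≤N} [ (r_k e^{iθ_k})^{\,j-1} ] |² dθ_1 ⋯ dθ_N = (2π)^N · per_{1≤i,j≤N} [ r_i^{2(j-1)} ], where per denotes the permanent. -/
open MeasureTheory Complex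

lemma exp_int_integral (n : ℤ) (hn : n ≠ 0) :
    ∫ θ in Set.Icc (0:ℝ) (2*Real.pi), Complex.exp ((n * Complex.I) * θ) = 0 := by
  rw [MeasureTheory.integral_Icc_eq_integral_Ioc,
      ← intervalIntegral.integral_of_le (by positivity)]
  rw [integral_exp_mul_complex (by simp [Complex.ext_iff, hn])]
  have h1 : ((n:ℂ) * Complex.I) * (2*Real.pi) = n * (2 * Real.pi * Complex.I) := by ring
  simp [h1, Complex.exp_int_mul_two_pi_mul_I]

lemma single_integral (r : ℝ) (a b : ℕ) :
    ∫ θ in Set.Icc (0:ℝ) (2*Real.pi),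
      ((r:ℂ) * Complex.exp (Complex.I * θ)) ^ a *
      (starRingEnd ℂ) (((r:ℂ) * Complex.exp (Complex.I * θ)) ^ b) =
    if a = b then (2*Real.pi) * (r:ℂ) ^ (2*a) else 0 := by
  have hpt : ∀ θ : ℝ, ((r:ℂ) * Complex.exp (Complex.I * θ)) ^ a *
      (starRingEnd ℂ) (((r:ℂ) * Complex.exp (Complex.I * θ)) ^ b) =
      (r:ℂ) ^ (a+b) * Complex.exp ((((a:ℤ) - b) * Complex.I) * θ) := by
    intro θ
    rw [map_pow, map_mul, Complex.conj_ofReal, ← Complex.exp_conj, map_mul, Complex.conj_I,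
      Complex.conj_ofReal, mul_pow, mul_pow, ← Complex.exp_nat_mul, ← Complex.exp_nat_mul]
    rw [mul_mul_mul_comm, ← pow_add, ← Complex.exp_add]
    push_cast
    ring_nf
  simp_rw [hpt]
  rw [MeasureTheory.integral_const_mul]
  push_cast
  by_cases h : a = b
  · subst h
    simp only [sub_self, zero_mul, Complex.exp_zero, if_true]
    simp [Real.volume_Icc, mul_comm, two_mul, pow_add, Real.pi_nonneg,
      ENNReal.toReal_ofReal, Real.pi_pos.le]
    ring
  · have hnz : ((a:ℤ) - b) ≠ 0 := sub_ne_zero.mpr (by exact_mod_cast h)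
    have h0 := exp_int_integral _ hnz
    push_cast at h0
    rw [h0, mul_zero, if_neg h]

theorem phase_integral_vandermonde_sq_eq_permanent (N : ℕ) (hN : 0 < N)
    (r : Fin N → ℝ) (hr : ∀ i, 0 ≤ r i) :
    ∫ θ : Fin N → ℝ in Set.univ.pi fun _ => Set.Icc (0 : ℝ) (2 * Real.pi),
        ‖(Matrix.det (Matrix.of fun k j : Fin N =>
              ((r k : ℂ) * Complex.exp (Complex.I * θ k)) ^ (j : ℕ)))‖ ^ 2 =
      (2 * Real.pi) ^ N *
        ∑ σ : Equiv.Perm (Fin N), ∏ i : Fin N, r i ^ (2 * (σ i : ℕ)) := by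
  classical
  set box : Set (Fin N → ℝ) := Set.univ.pi fun _ => Set.Icc (0 : ℝ) (2 * Real.pi) with hbox
  have hboxm : MeasurableSet box := MeasurableSet.univ_pi (fun _ => measurableSet_Icc)
  have hboxc : IsCompact box := isCompact_univ_pi (fun _ => isCompact_Icc)
  set D : (Fin N → ℝ) → ℂ := fun θ => Matrix.det (Matrix.of fun k j : Fin N =>
      ((r k : ℂ) * Complex.exp (Complex.I * θ k)) ^ (j : ℕ)) with hD
  set e : Equiv.Perm (Fin N) → ℂ := fun σ => ((Equiv.Perm.sign σ : ℤ) : ℂ) with he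
  -- determinant expansion
  have hDsum : ∀ θ : Fin N → ℝ, D θ = ∑ σ : Equiv.Perm (Fin N),
      e σ * ∏ i, ((r i : ℂ) * Complex.exp (Complex.I * θ i)) ^ (σ i : ℕ) := by
    intro θ
    show Matrix.det (Matrix.of fun k j : Fin N =>
      ((r k : ℂ) * Complex.exp (Complex.I * θ k)) ^ (j : ℕ)) = _
    rw [← Matrix.det_transpose, Matrix.det_apply]
    refine Finset.sum_congr rfl fun σ _ => ?_
    simp [Matrix.transpose_apply, Units.smul_def, zsmul_eq_mul, he]
  -- expand |D|^2 as double sum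
  have key : ∀ θ : Fin N → ℝ, D θ * (starRingEnd ℂ) (D θ) =
      ∑ σ : Equiv.Perm (Fin N), ∑ τ : Equiv.Perm (Fin N), (e σ * e τ) *
        ∏ i, (((r i : ℂ) * Complex.exp (Complex.I * θ i)) ^ (σ i : ℕ) *
          (starRingEnd ℂ) (((r i : ℂ) * Complex.exp (Complex.I * θ i)) ^ (τ i : ℕ))) := by
    intro θ
    rw [hDsum θ, map_sum, Finset.sum_mul_sum]
    refine Finset.sum_congr rfl fun σ _ => Finset.sum_congr rfl fun τ _ => ?_
    rw [map_mul, map_prod]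
    have hce : (starRingEnd ℂ) (e τ) = e τ := by simp [he]
    rw [hce, Finset.prod_mul_distrib]
    ring
  -- Fubini for products
  have fub : ∀ g : Fin N → ℝ → ℂ, ∫ θ in box, ∏ i, g i (θ i) =
      ∏ i, ∫ x in Set.Icc (0:ℝ) (2*Real.pi), g i x := by
    intro g
    rw [← MeasureTheory.integral_indicator hboxm]
    have hind : box.indicator (fun θ => ∏ i, g i (θ i)) =
        fun θ => ∏ i, (Set.Icc (0:ℝ) (2*Real.pi)).indicator (g i) (θ i) := by
      ext θ
      by_cases hθ : θ ∈ box
      · rw [Set.indicator_of_mem hθ]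
        exact Finset.prod_congr rfl fun i _ =>
          (Set.indicator_of_mem (hθ i (Set.mem_univ i)) _).symm
      · rw [Set.indicator_of_notMem hθ]
        obtain ⟨i, hi⟩ : ∃ i, θ i ∉ Set.Icc (0:ℝ) (2*Real.pi) := by
          rw [hbox, Set.mem_univ_pi] at hθ
          push_neg at hθ
          exact hθ
        exact (Finset.prod_eq_zero (Finset.mem_univ i)
          (Set.indicator_of_notMem hi _)).symm
    rw [hind, MeasureTheory.integral_fintype_prod_volume_eq_prod]
    exact Finset.prod_congr rfl fun i _ =>
      (MeasureTheory.integral_indicator measurableSet_Icc)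
  -- integrability of each term
  have hint : ∀ σ τ : Equiv.Perm (Fin N), MeasureTheory.IntegrableOn
      (fun θ : Fin N → ℝ => (e σ * e τ) *
        ∏ i, (((r i : ℂ) * Complex.exp (Complex.I * θ i)) ^ (σ i : ℕ) *
          (starRingEnd ℂ) (((r i : ℂ) * Complex.exp (Complex.I * θ i)) ^ (τ i : ℕ)))) box := by
    intro σ τ
    have h0 : ∀ i : Fin N, Continuous fun θ : Fin N → ℝ =>
        (r i : ℂ) * Complex.exp (Complex.I * θ i) := fun i =>
      continuous_const.mul (Complex.continuous_exp.comp
        (continuous_const.mul (Complex.continuous_ofReal.comp (continuous_apply i))))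
    exact (Continuous.continuousOn (continuous_const.mul
      (continuous_finset_prod _ fun i _ => ((h0 i).pow _).mul
        (continuous_star.comp ((h0 i).pow _))))).integrableOn_compact hboxc
  -- main complex computation
  have main : ∫ θ in box, D θ * (starRingEnd ℂ) (D θ) =
      ((2 * Real.pi) ^ N * ∑ σ : Equiv.Perm (Fin N), ∏ i : Fin N, r i ^ (2 * (σ i : ℕ)) : ℝ) := by
    have step1 : ∫ θ in box, D θ * (starRingEnd ℂ) (D θ) =
        ∑ σ : Equiv.Perm (Fin N), ∑ τ : Equiv.Perm (Fin N), ∫ θ in box, (e σ * e τ) *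
          ∏ i, (((r i : ℂ) * Complex.exp (Complex.I * θ i)) ^ (σ i : ℕ) *
            (starRingEnd ℂ) (((r i : ℂ) * Complex.exp (Complex.I * θ i)) ^ (τ i : ℕ))) := by
      simp_rw [key]
      rw [MeasureTheory.integral_finset_sum _
        (fun σ _ => MeasureTheory.integrable_finset_sum _ (fun τ _ => hint σ τ))]
      exact Finset.sum_congr rfl fun σ _ =>
        MeasureTheory.integral_finset_sum _ (fun τ _ => hint σ τ)
    rw [step1]
    have hterm : ∀ σ τ : Equiv.Perm (Fin N),
        (∫ θ in box, (e σ * e τ) *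
          ∏ i, (((r i : ℂ) * Complex.exp (Complex.I * θ i)) ^ (σ i : ℕ) *
            (starRingEnd ℂ) (((r i : ℂ) * Complex.exp (Complex.I * θ i)) ^ (τ i : ℕ)))) =
        (e σ * e τ) * ∏ i, (if (σ i : ℕ) = (τ i : ℕ) then
            (2*Real.pi) * (r i : ℂ) ^ (2*(σ i : ℕ)) else 0) := by
      intro σ τ
      rw [MeasureTheory.integral_const_mul,
        fub (fun i x => ((r i : ℂ) * Complex.exp (Complex.I * x)) ^ (σ i : ℕ) *
          (starRingEnd ℂ) (((r i : ℂ) * Complex.exp (Complex.I * x)) ^ (τ i : ℕ)))]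
      exact congrArg _ (Finset.prod_congr rfl fun i _ => single_integral (r i) _ _)
    calc ∑ σ : Equiv.Perm (Fin N), ∑ τ : Equiv.Perm (Fin N), (∫ θ in box, (e σ * e τ) *
          ∏ i, (((r i : ℂ) * Complex.exp (Complex.I * θ i)) ^ (σ i : ℕ) *
            (starRingEnd ℂ) (((r i : ℂ) * Complex.exp (Complex.I * θ i)) ^ (τ i : ℕ))))
        = ∑ σ : Equiv.Perm (Fin N), (2*Real.pi : ℂ) ^ N * ∏ i, (r i : ℂ) ^ (2*(σ i : ℕ)) := by
          refine Finset.sum_congr rfl fun σ _ => ?_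
          rw [Finset.sum_eq_single σ]
          · rw [hterm σ σ]
            have h1 : e σ * e σ = 1 := by
              simp only [he, ← Int.cast_mul, ← Units.val_mul, Int.units_mul_self,
                Units.val_one, Int.cast_one]
            simp only [if_true, reduceIte]
            rw [h1, one_mul, Finset.prod_mul_distrib, Finset.prod_const, Finset.card_univ,
              Fintype.card_fin]
          · intro τ _ hτ
            rw [hterm σ τ]
            obtain ⟨i, hi⟩ : ∃ i, σ i ≠ τ i := by
              by_contra hc
              push_neg at hc
              exact hτ (Equiv.ext hc).symm
            have hz0 : (if (σ i : ℕ) = (τ i : ℕ) then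
                (2*Real.pi) * (r i : ℂ) ^ (2*(σ i : ℕ)) else 0) = 0 :=
              if_neg (fun h => hi (Fin.val_injective h))
            rw [Finset.prod_eq_zero (Finset.mem_univ i) hz0, mul_zero]
          · intro h; exact absurd (Finset.mem_univ σ) h
      _ = ((2 * Real.pi) ^ N * ∑ σ : Equiv.Perm (Fin N), ∏ i : Fin N, r i ^ (2 * (σ i : ℕ)) : ℝ) := by
          rw [← Finset.mul_sum]
          push_cast
          rfl
  -- conclude
  apply Complex.ofReal_injective
  rw [show ((∫ θ : Fin N → ℝ in box, ‖D θ‖ ^ 2 : ℝ) : ℂ) =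
    ∫ θ : Fin N → ℝ in box, ((‖D θ‖ ^ 2 : ℝ) : ℂ) from integral_ofReal.symm]
  have habs : ∀ θ : Fin N → ℝ, ((‖D θ‖ ^ 2 : ℝ) : ℂ) = D θ * (starRingEnd ℂ) (D θ) := by
    intro θ
    rw [Complex.mul_conj]
    norm_cast
    exact Complex.sq_norm _
  calc (∫ θ in box, ((‖D θ‖ ^ 2 : ℝ) : ℂ))
      = ∫ θ in box, D θ * (starRingEnd ℂ) (D θ) := by simp_rw [habs]
    _ = _ := main
end

section
/- Andréief's integration formula: Let (Ω, μ) be a measure space, N a positive integer, and f_1, …, f_N, g_1, …, g_N : Ω → ℂ measurable functions such that all products f_i g_j are μ-integrable. Then ∫_{Ω^N} det_{1≤i,j≤N}[f_i(x_j)] · det_{1≤i,j≤N}[g_i(x_j)] dμ(x_1)⋯dμ(x_N) = N! · det_{1≤i,j≤N} [ ∫_Ω f_i(x) g_j(x) dμ(x) ]. -/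
open MeasureTheory

theorem andreief_integration_formula {Ω : Type*} [MeasurableSpace Ω] (μ : Measure Ω)
    [SigmaFinite μ] (N : ℕ) (f g : Fin N → Ω → ℂ)
    (hf : ∀ i, Measurable (f i)) (hg : ∀ i, Measurable (g i))
    (hint : ∀ i j, Integrable (fun x => f i x * g j x) μ) :
    ∫ x : Fin N → Ω,
        Matrix.det (Matrix.of fun i j : Fin N => f i (x j)) *
          Matrix.det (Matrix.of fun i j : Fin N => g i (x j)) ∂(Measure.pi fun _ => μ) =
      (N.factorial : ℂ) *
        Matrix.det (Matrix.of fun i j : Fin N => ∫ x, f i x * g j x ∂μ) := by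
  classical
  letI : MeasureSpace Ω := ⟨μ⟩
  have hvol : (Measure.pi fun _ : Fin N => μ) = (volume : Measure (Fin N → Ω)) := rfl
  set A : Matrix (Fin N) (Fin N) ℂ := Matrix.of fun i j : Fin N => ∫ x, f i x * g j x ∂μ with hA
  -- expand determinants
  have hexp : ∀ x : Fin N → Ω,
      Matrix.det (Matrix.of fun i j : Fin N => f i (x j)) *
        Matrix.det (Matrix.of fun i j : Fin N => g i (x j)) =
      ∑ σ : Equiv.Perm (Fin N), ∑ τ : Equiv.Perm (Fin N),
        ((Equiv.Perm.sign σ : ℤ) : ℂ) * ((Equiv.Perm.sign τ : ℤ) : ℂ) *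
          ∏ j, (f (σ j) (x j) * g (τ j) (x j)) := by
    intro x
    rw [Matrix.det_apply', Matrix.det_apply', Finset.sum_mul_sum]
    refine Finset.sum_congr rfl fun σ _ => Finset.sum_congr rfl fun τ _ => ?_
    simp only [Matrix.of_apply]
    rw [Finset.prod_mul_distrib]
    ring
  -- integrability of each summand
  have hintpi : ∀ σ τ : Equiv.Perm (Fin N),
      Integrable (fun x : Fin N → Ω => ∏ j, (f (σ j) (x j) * g (τ j) (x j))) volume :=
    fun σ τ => Integrable.fintype_prod fun j => hint (σ j) (τ j)
  rw [hvol]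
  simp_rw [hexp]
  rw [integral_finset_sum _ (fun σ _ => integrable_finset_sum _
    (fun τ _ => ((hintpi σ τ).const_mul _)))]
  have hterm : ∀ σ τ : Equiv.Perm (Fin N),
      (∫ x : Fin N → Ω, ((Equiv.Perm.sign σ : ℤ) : ℂ) * ((Equiv.Perm.sign τ : ℤ) : ℂ) *
          ∏ j, (f (σ j) (x j) * g (τ j) (x j))) =
      ((Equiv.Perm.sign σ : ℤ) : ℂ) * ((Equiv.Perm.sign τ : ℤ) : ℂ) *
          ∏ j, A (σ j) (τ j) := by
    intro σ τ
    rw [integral_const_mul, ← hvol, integral_fintype_prod_eq_prod (ι := Fin N)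
      (f := fun j x => f (σ j) x * g (τ j) x)]
    rfl
  calc
    ∑ σ : Equiv.Perm (Fin N), ∫ x : Fin N → Ω, ∑ τ : Equiv.Perm (Fin N),
        ((Equiv.Perm.sign σ : ℤ) : ℂ) * ((Equiv.Perm.sign τ : ℤ) : ℂ) *
          ∏ j, (f (σ j) (x j) * g (τ j) (x j))
      = ∑ σ : Equiv.Perm (Fin N), ∑ τ : Equiv.Perm (Fin N),
          ((Equiv.Perm.sign σ : ℤ) : ℂ) * ((Equiv.Perm.sign τ : ℤ) : ℂ) *
            ∏ j, A (σ j) (τ j) := by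
        refine Finset.sum_congr rfl fun σ _ => ?_
        rw [integral_finset_sum _ (fun τ _ => ((hintpi σ τ).const_mul _))]
        exact Finset.sum_congr rfl fun τ _ => hterm σ τ
    _ = ∑ σ : Equiv.Perm (Fin N), A.det := by
        refine Finset.sum_congr rfl fun σ _ => ?_
        have h1 : ∑ τ : Equiv.Perm (Fin N),
            ((Equiv.Perm.sign τ : ℤ) : ℂ) * ∏ j, A (σ j) (τ j) =
            ((A.submatrix σ id).transpose).det := by
          rw [Matrix.det_apply']
          exact Finset.sum_congr rfl fun τ _ => by
            simp [Matrix.transpose_apply, Matrix.submatrix_apply]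
        calc
          ∑ τ : Equiv.Perm (Fin N),
              ((Equiv.Perm.sign σ : ℤ) : ℂ) * ((Equiv.Perm.sign τ : ℤ) : ℂ) *
                ∏ j, A (σ j) (τ j)
            = ((Equiv.Perm.sign σ : ℤ) : ℂ) * ∑ τ : Equiv.Perm (Fin N),
                ((Equiv.Perm.sign τ : ℤ) : ℂ) * ∏ j, A (σ j) (τ j) := by
              rw [Finset.mul_sum]; exact Finset.sum_congr rfl fun τ _ => by ring
          _ = ((Equiv.Perm.sign σ : ℤ) : ℂ) * ((Equiv.Perm.sign σ : ℤ) : ℂ) * A.det := by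
              rw [h1, Matrix.det_transpose, Matrix.det_permute]
              push_cast
              ring
          _ = A.det := by
              have : (Equiv.Perm.sign σ : ℤ) * (Equiv.Perm.sign σ : ℤ) = 1 := by
                rcases Int.units_eq_one_or (Equiv.Perm.sign σ) with h | h <;> simp [h]
              rw [← Complex.ofReal_intCast]
              push_cast
              rw [show (((Equiv.Perm.sign σ : ℤ) : ℂ) * ((Equiv.Perm.sign σ : ℤ) : ℂ))
                = (((Equiv.Perm.sign σ : ℤ) * (Equiv.Perm.sign σ : ℤ) : ℤ) : ℂ) by push_cast; ring,
                this]
              simp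
    _ = (N.factorial : ℂ) * A.det := by
        simp [Finset.sum_const, Fintype.card_perm, Fintype.card_fin, nsmul_eq_mul]
end
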